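/- If a strategy profile s is such that for every player i the strategy s_i permits the segment Ω (i.e., some run in Ω is consistent with s_i), then there is exactly one run in Ω consistent with the full profile s. -/
import Mathlib


/-- Stages: non-positive integers. -/
abbrev Stage : Type := {n : ℤ // n ≤ 0}

/-- A run assigns an action to each stage. -/
abbrev Run (A : Type) : Type := Stage → A

/-- A position at stage `n` records the actions at all stages `k < n`. -/
abbrev Position (A : Type) (n : ℤ) : Type := {k : ℤ // k < n} → A

/-- The space of all positions. -/
abbrev Pos (A : Type) : Type := Σ n : Stage, Position A n.1

/-- The position induced by a run `r` at stage `n`. -/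
def restrictRun {A : Type} (r : Run A) (n : Stage) : Position A n.1 :=
  fun k => r ⟨k.1, le_trans k.2.le n.2⟩

/-- A run `r` is consistent with a strategy `si` of player `i`: at every stage where `i` is the
active player along `r`, the action of `r` is the one recommended by `si`. -/
def ConsistentI {I A : Type} (ι : Pos A → I) (i : I) (si : Pos A → A) (r : Run A) : Prop :=
  ∀ n : Stage, ι ⟨n, restrictRun r n⟩ = i → r n = si ⟨n, restrictRun r n⟩

/-- A run `r` is consistent with a strategy profile `s`. -/
def ConsistentP {I A : Type} (ι : Pos A → I) (s : I → Pos A → A) (r : Run A) : Prop :=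
  ∀ n : Stage, r n = s (ι ⟨n, restrictRun r n⟩) ⟨n, restrictRun r n⟩

/-- Two runs differ in at most finitely many coordinates (same segment). -/
def FinDiff {A : Type} (r r' : Run A) : Prop := {k : Stage | r k ≠ r' k}.Finite

/-- Player `i` is active infinitely often along the run `r`. -/
def ActiveIO {I A : Type} (ι : Pos A → I) (i : I) (r : Run A) : Prop :=
  {n : Stage | ι ⟨n, restrictRun r n⟩ = i}.Infinite

/-- Auxiliary sequence of runs: starting from `r0`, at step `m+1` fix the value at stage
`N + m` to the strategy's recommendation. -/
def seqF {I A : Type} (ι : Pos A → I) (s : I → Pos A → A) (r0 : Run A) (N : ℤ) : ℕ → Run A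
  | 0 => r0
  | m + 1 => fun n =>
      if n.1 = N + m then
        s (ι ⟨n, restrictRun (seqF ι s r0 N m) n⟩) ⟨n, restrictRun (seqF ι s r0 N m) n⟩
      else seqF ι s r0 N m n

/-- The limit run of the sequence. -/
def limF {I A : Type} (ι : Pos A → I) (s : I → Pos A → A) (r0 : Run A) (N : ℤ) : Run A :=
  fun n => seqF ι s r0 N (n.1 - N + 1).toNat n

lemma seqF_stab {I A : Type} (ι : Pos A → I) (s : I → Pos A → A) (r0 : Run A) (N : ℤ)
    {m m' : ℕ} (h : m ≤ m') (n : Stage) (hn : n.1 < N + m) :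
    seqF ι s r0 N m' n = seqF ι s r0 N m n := by
  obtain ⟨d, rfl⟩ := Nat.exists_eq_add_of_le h
  clear h
  induction d with
  | zero => rfl
  | succ d ih =>
    have hne : ¬ (n.1 = N + ((m + d : ℕ) : ℤ)) := by push_cast; omega
    show seqF ι s r0 N ((m + d) + 1) n = _
    simp only [seqF]
    rw [if_neg hne]
    exact ih

lemma seqF_agree {I A : Type} (ι : Pos A → I) (s : I → Pos A → A) (r0 : Run A) (N : ℤ)
    (m : ℕ) (n : Stage) (hn : n.1 < N + m) :
    seqF ι s r0 N m n = limF ι s r0 N n := by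
  unfold limF
  set m0 := (n.1 - N + 1).toNat with hm0
  have hnm0 : n.1 < N + m0 := by omega
  rcases Nat.le_total m m0 with h | h
  · exact (seqF_stab ι s r0 N h n hn).symm
  · exact (seqF_stab ι s r0 N h n hnm0) ▸ rfl

lemma restrict_agree {I A : Type} (ι : Pos A → I) (s : I → Pos A → A) (r0 : Run A) (N : ℤ)
    (m : ℕ) (n : Stage) (hn : n.1 ≤ N + m) :
    restrictRun (seqF ι s r0 N m) n = restrictRun (limF ι s r0 N) n := by
  funext k
  exact seqF_agree ι s r0 N m ⟨k.1, le_trans k.2.le n.2⟩ (by have := k.2; simp at this ⊢; omega)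

lemma limF_low {I A : Type} (ι : Pos A → I) (s : I → Pos A → A) (r0 : Run A) (N : ℤ)
    (n : Stage) (hn : n.1 < N) : limF ι s r0 N n = r0 n := by
  unfold limF
  have : (n.1 - N + 1).toNat = 0 := by omega
  rw [this]
  rfl

/-- if every player's strategy permits the segment of the run `r0` (some run of
that segment is consistent with it), then exactly one run of that segment is consistent with
the whole profile. -/
theorem unique_consistent_run_in_segment (I A : Type) [Fintype I] [Nonempty I] [Fintype A]
    (hA : 2 ≤ Fintype.card A) (ι : Pos A → I) (s : I → Pos A → A) (r0 : Run A)
    (hperm : ∀ i : I, ∃ r : Run A, FinDiff r r0 ∧ ConsistentI ι i (s i) r) :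
    ∃! r : Run A, FinDiff r r0 ∧ ConsistentP ι s r := by
  classical
  -- choose witnesses
  choose w hw1 hw2 using hperm
  -- finite union of difference sets
  have hD : (⋃ i : I, {k : Stage | w i k ≠ r0 k}).Finite :=
    Set.finite_iUnion (fun i => hw1 i)
  obtain ⟨N, hN⟩ : ∃ N : ℤ, ∀ k : Stage, k.1 < N → ∀ i, w i k = r0 k := by
    have hV : (Subtype.val '' (⋃ i : I, {k : Stage | w i k ≠ r0 k})).Finite :=
      hD.image _
    obtain ⟨N, hNlb⟩ := hV.bddBelow
    refine ⟨N, fun k hk i => ?_⟩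
    by_contra h
    have : k.1 ∈ Subtype.val '' (⋃ i : I, {k : Stage | w i k ≠ r0 k}) :=
      ⟨k, Set.mem_iUnion.2 ⟨i, h⟩, rfl⟩
    exact absurd (hNlb this) (by omega)
  set r := limF ι s r0 N with hr
  -- r agrees with r0 (and with each w i) below N
  have hlow : ∀ k : Stage, k.1 < N → r k = r0 k := fun k hk => limF_low ι s r0 N k hk
  -- FinDiff r r0
  have hfin : FinDiff r r0 := by
    have hsub : {k : Stage | r k ≠ r0 k} ⊆ Subtype.val ⁻¹' Set.Icc N 0 := by
      intro k hk
      simp only [Set.mem_preimage, Set.mem_Icc]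
      refine ⟨?_, k.2⟩
      by_contra h
      exact hk (hlow k (by omega))
    exact Set.Finite.subset ((Set.finite_Icc N 0).preimage Subtype.val_injective.injOn) hsub
  -- consistency of r
  have hcons : ConsistentP ι s r := by
    intro n
    rcases lt_or_ge n.1 N with hn | hn
    · -- below N : use the permitting runs
      set i := ι ⟨n, restrictRun r n⟩ with hi
      have hpos : restrictRun r n = restrictRun (w i) n := by
        funext k
        have hk : (k.1 : ℤ) < N := lt_trans k.2 hn
        have := hN ⟨k.1, le_trans k.2.le n.2⟩ hk i
        rw [restrictRun, restrictRun, this, hlow ⟨k.1, le_trans k.2.le n.2⟩ hk]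
      have hwn : w i n = s i ⟨n, restrictRun (w i) n⟩ := by
        apply hw2 i
        rw [← hpos, ← hi]
      have : r n = w i n := by
        rw [hlow n hn, (hN n hn i).symm]
      rw [this, hwn, ← hpos]
    · -- at or above N : unfold the recursion
      set m0 := (n.1 - N).toNat with hm0
      have h1 : (n.1 - N + 1).toNat = m0 + 1 := by omega
      have h2 : n.1 = N + m0 := by omega
      have h3 : r n = seqF ι s r0 N (m0 + 1) n := by rw [hr, limF, h1]
      have h4 : seqF ι s r0 N (m0 + 1) n
          = s (ι ⟨n, restrictRun (seqF ι s r0 N m0) n⟩) ⟨n, restrictRun (seqF ι s r0 N m0) n⟩ := by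
        simp only [seqF, h2, if_true]
      have h5 : restrictRun (seqF ι s r0 N m0) n = restrictRun r n :=
        restrict_agree ι s r0 N m0 n (by omega)
      rw [h3, h4, h5]
  refine ⟨r, ⟨hfin, hcons⟩, ?_⟩
  -- uniqueness
  rintro r' ⟨hfin', hcons'⟩
  obtain ⟨M, hM⟩ : ∃ M : ℤ, ∀ k : Stage, k.1 < M → r' k = r k := by
    have hV : (Subtype.val '' ({k : Stage | r k ≠ r0 k} ∪ {k : Stage | r' k ≠ r0 k})).Finite :=
      (hfin.union hfin').image _
    obtain ⟨M, hMlb⟩ := hV.bddBelow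
    refine ⟨M, fun k hk => ?_⟩
    have h1 : r k = r0 k := by
      by_contra h
      exact absurd (hMlb ⟨k, Or.inl h, rfl⟩) (by omega)
    have h2 : r' k = r0 k := by
      by_contra h
      exact absurd (hMlb ⟨k, Or.inr h, rfl⟩) (by omega)
    rw [h1, h2]
  have key : ∀ m : ℕ, ∀ n : Stage, n.1 < M + m → r' n = r n := by
    intro m
    induction m with
    | zero => intro n hn; exact hM n (by omega)
    | succ m ih =>
      intro n hn
      have hpos : restrictRun r' n = restrictRun r n := by
        funext k
        exact ih ⟨k.1, le_trans k.2.le n.2⟩ (by have := k.2; simp at this ⊢; omega)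
      rw [hcons' n, hcons n, hpos]
  funext n
  exact key ((n.1 - M).toNat + 1) n (by omega)
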